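/- arXiv:2209.14158 — 4 statements merged into one kernel-verified Lean document; each statement's English description precedes it below -/
import Mathlib

section
/- Let n, ℓ be positive integers and let f be an ℓ-local function with n input blocks and n output blocks (inputs indexed 1,…,n, outputs indexed 1,…,n). Set L := ⌊n/(4ℓ)⌋. Then the number of input indices m with m > n/2 that are L-good satisfies |{m ∈ {1,…,n} : m > n/2 and m is L-good}| ≥ n/4 (equivalently, 4·|{m : m > n/2, m L-good}| ≥ n). -/
/-- Output index `k` is influenced by input index `j` if there exist two inputs that agree
at all coordinates except `j` whose images under `f` differ at coordinate `k`. -/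
def Influences {n : ℕ} {α β : Type*} (f : (Fin n → α) → (Fin n → β)) (j k : Fin n) : Prop :=
  ∃ x y : Fin n → α, (∀ i, i ≠ j → x i = y i) ∧ f x k ≠ f y k

/-- The forward lightcone of input index `j`: the set of output indices it influences. -/
def fwdLight {n : ℕ} {α β : Type*} (f : (Fin n → α) → (Fin n → β)) (j : Fin n) : Set (Fin n) :=
  {k | Influences f j k}

/-- The backward lightcone of output index `k`: the set of input indices influencing it. -/
def backLight {n : ℕ} {α β : Type*} (f : (Fin n → α) → (Fin n → β)) (k : Fin n) : Set (Fin n) :=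
  {j | Influences f j k}

open Finset in
/-- If `f` is an `ℓ`-local function with `n` input and `n` output blocks
and `L := ⌊n / (4ℓ)⌋`, then the number of input indices `m` in the second half
(`m > n/2`, for one-based indices) that are `L`-good (their forward lightcone avoids the
first `L` output indices) is at least `n/4`, i.e. `4·|{m : m > n/2, m L-good}| ≥ n`. -/
theorem stmt0 {α β : Type*} (n ℓ : ℕ) (hn : 0 < n) (hℓ : 0 < ℓ)
    (f : (Fin n → α) → (Fin n → β))
    (hloc : ∀ k : Fin n, (backLight f k).ncard ≤ ℓ) :
    n ≤ 4 * {m : Fin n | n < 2 * ((m : ℕ) + 1) ∧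
        fwdLight f m ∩ {k : Fin n | (k : ℕ) < n / (4 * ℓ)} = ∅}.ncard := by
  classical
  set L := n / (4 * ℓ) with hL
  -- finset versions
  set Good : Finset (Fin n) := univ.filter (fun m => n < 2 * ((m : ℕ) + 1) ∧
      fwdLight f m ∩ {k : Fin n | (k : ℕ) < L} = ∅) with hGood
  have hset : {m : Fin n | n < 2 * ((m : ℕ) + 1) ∧
      fwdLight f m ∩ {k : Fin n | (k : ℕ) < L} = ∅} = (Good : Set (Fin n)) := by
    ext m; simp [hGood]
  rw [hset, Set.ncard_coe_finset]
  set Shalf : Finset (Fin n) := univ.filter (fun m => n < 2 * ((m : ℕ) + 1)) with hShalf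
  set Bad : Finset (Fin n) := univ.filter (fun m => n < 2 * ((m : ℕ) + 1) ∧
      ∃ k : Fin n, (k : ℕ) < L ∧ Influences f m k) with hBad
  -- Shalf ⊆ Good ∪ Bad
  have hsub : Shalf ⊆ Good ∪ Bad := by
    intro m hm
    simp only [hShalf, mem_filter, mem_univ, true_and] at hm
    by_cases h : ∃ k : Fin n, (k : ℕ) < L ∧ Influences f m k
    · exact mem_union_right _ (by simp [hBad, hm, h])
    · refine mem_union_left _ ?_
      simp only [hGood, mem_filter, mem_univ, true_and]
      refine ⟨hm, ?_⟩
      ext k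
      simp only [Set.mem_inter_iff, Set.mem_setOf_eq, Set.mem_empty_iff_false, iff_false,
        fwdLight]
      push_neg at h
      intro ⟨h1, h2⟩
      exact h k h2 h1
  -- card of Shalf
  have hShalfcard : Shalf.card = n - n / 2 := by
    have : Shalf = Ici (⟨n / 2, Nat.div_lt_self hn (by norm_num)⟩ : Fin n) := by
      ext m
      simp only [hShalf, mem_filter, mem_univ, true_and, mem_Ici, Fin.le_def]
      omega
    rw [this, Fin.card_Ici]
  -- card of Bad
  have hBadcard : Bad.card ≤ L * ℓ := by
    have hsub2 : Bad ⊆ (univ.filter (fun k : Fin n => (k : ℕ) < L)).biUnion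
        (fun k => univ.filter (fun m => Influences f m k)) := by
      intro m hm
      simp only [hBad, mem_filter, mem_univ, true_and] at hm
      obtain ⟨-, k, hk, hik⟩ := hm
      simp only [mem_biUnion, mem_filter, mem_univ, true_and]
      exact ⟨k, hk, hik⟩
    calc Bad.card ≤ _ := card_le_card hsub2
      _ ≤ ∑ k ∈ univ.filter (fun k : Fin n => (k : ℕ) < L),
            (univ.filter (fun m => Influences f m k)).card := card_biUnion_le
      _ ≤ ∑ _k ∈ univ.filter (fun k : Fin n => (k : ℕ) < L), ℓ := by
          refine Finset.sum_le_sum fun k _ => ?_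
          have := hloc k
          have heq : backLight f k = ((univ.filter (fun m => Influences f m k)) : Set (Fin n)) := by
            ext m; simp [backLight]
          rwa [heq, Set.ncard_coe_finset] at this
      _ = (univ.filter (fun k : Fin n => (k : ℕ) < L)).card * ℓ := by
          rw [Finset.sum_const, smul_eq_mul]
      _ ≤ L * ℓ := by
          refine Nat.mul_le_mul_right ℓ ?_
          refine le_trans (Finset.card_le_card_of_injOn (fun k => (k : ℕ))
            (t := Finset.range L) ?_ ?_) (le_of_eq (Finset.card_range L))
          · intro k hk
            rw [Finset.mem_coe, mem_filter] at hk
            simpa [Finset.mem_range] using hk.2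
          · intro a _ b _ h
            exact Fin.val_injective h
  -- arithmetic
  have h1 : Shalf.card ≤ Good.card + Bad.card :=
    le_trans (card_le_card hsub) (card_union_le _ _)
  have h2 : 4 * (L * ℓ) ≤ n := by
    have := Nat.div_mul_le_self n (4 * ℓ)
    calc 4 * (L * ℓ) = L * (4 * ℓ) := by ring
      _ ≤ n := this
  have h3 : n / 2 * 2 ≤ n := Nat.div_mul_le_self n 2
  omega
end

section
/- Let n ≥ 5 and ℓ ≥ 1 be integers and let f be an ℓ-local function with n input blocks and n output blocks. Set L := ⌊n/(4ℓ)⌋. Then there exists an input index m ∈ {1,…,n} with m > n/2 such that m is L-good (i.e., L→(m) ∩ {1,…,L} = ∅) and m has limited signaling (i.e., |L→(m)| ≤ 8ℓ). -/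
/-- Let `n ≥ 5`, `ℓ ≥ 1`, and let `f` be an `ℓ`-local function with `n`
input blocks and `n` output blocks. Set `L := ⌊n / (4ℓ)⌋`. Then there is an input index
`m` in the second half (`m > n/2`, one-based) that is `L`-good (its forward lightcone
avoids the first `L` output indices) and has limited signaling (`|L→(m)| ≤ 8ℓ`). -/
theorem stmt2 {α β : Type*} (n ℓ : ℕ) (hn : 5 ≤ n) (hℓ : 1 ≤ ℓ)
    (f : (Fin n → α) → (Fin n → β))
    (hloc : ∀ k : Fin n, (backLight f k).ncard ≤ ℓ) :
    ∃ m : Fin n, n < 2 * ((m : ℕ) + 1) ∧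
      fwdLight f m ∩ {k : Fin n | (k : ℕ) < n / (4 * ℓ)} = ∅ ∧
      (fwdLight f m).ncard ≤ 8 * ℓ := by
  classical
  set c : ℕ := n / (4 * ℓ) with hc
  set Fwd : Fin n → Finset (Fin n) :=
    fun j => Finset.univ.filter (fun k => Influences f j k) with hFwd
  set Bck : Fin n → Finset (Fin n) :=
    fun k => Finset.univ.filter (fun j => Influences f j k) with hBck
  have hfwd_card : ∀ j, (fwdLight f j).ncard = (Fwd j).card := by
    intro j
    rw [Set.ncard_eq_toFinset_card']
    congr 1
    ext k; simp [fwdLight, hFwd]; exact Set.mem_toFinset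
  have hbck_card : ∀ k, (backLight f k).ncard = (Bck k).card := by
    intro k
    rw [Set.ncard_eq_toFinset_card']
    congr 1
    ext j; simp [backLight, hBck]; exact Set.mem_toFinset
  -- double counting
  have hsum : ∑ j, (Fwd j).card = ∑ k, (Bck k).card := by
    simp only [hFwd, hBck, Finset.card_filter]
    exact Finset.sum_comm
  have hsum_le : ∑ j, (Fwd j).card ≤ n * ℓ := by
    rw [hsum]
    calc ∑ k, (Bck k).card ≤ ∑ _k : Fin n, ℓ :=
          Finset.sum_le_sum (fun k _ => by rw [← hbck_card k]; exact hloc k)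
      _ = n * ℓ := by simp [Finset.sum_const, mul_comm]
  -- bad sets
  set Bad1 : Finset (Fin n) := Finset.univ.filter (fun j => 8 * ℓ < (Fwd j).card) with hBad1
  set First : Finset (Fin n) := Finset.univ.filter (fun k : Fin n => (k : ℕ) < c) with hFirst
  set Bad2 : Finset (Fin n) := First.biUnion Bck with hBad2
  -- Bad1 bound
  have hb1 : Bad1.card * (8 * ℓ + 1) ≤ n * ℓ := by
    have h1 : Bad1.card • (8 * ℓ + 1) ≤ ∑ j ∈ Bad1, (Fwd j).card := by
      apply Finset.card_nsmul_le_sum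
      intro j hj
      have := (Finset.mem_filter.mp hj).2
      omega
    have h2 : ∑ j ∈ Bad1, (Fwd j).card ≤ ∑ j, (Fwd j).card :=
      Finset.sum_le_sum_of_subset (Finset.subset_univ _)
    simpa [smul_eq_mul] using le_trans (le_trans h1 h2) hsum_le
  have hb1' : 8 * Bad1.card ≤ n := by
    have : (8 * Bad1.card) * ℓ ≤ n * ℓ := by nlinarith [hb1]
    exact Nat.le_of_mul_le_mul_right this (by omega)
  have hb1'' : Bad1.card ≤ n / 8 := Nat.le_div_iff_mul_le (by norm_num) |>.mpr (by omega)
  -- Bad2 bound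
  have hFirst_card : First.card ≤ c := by
    have h := Finset.card_le_card_of_injOn (s := First) (t := Finset.range c)
      (fun k : Fin n => (k : ℕ))
      (fun k hk => Finset.mem_range.mpr (Finset.mem_filter.mp hk).2)
      (fun a _ b _ h => Fin.val_injective h)
    simpa using h
  have hb2 : Bad2.card ≤ c * ℓ := by
    calc Bad2.card ≤ ∑ k ∈ First, (Bck k).card := Finset.card_biUnion_le
      _ ≤ First.card • ℓ := Finset.sum_le_card_nsmul _ _ _
            (fun k _ => by rw [← hbck_card k]; exact hloc k)
      _ ≤ c * ℓ := by simpa [smul_eq_mul] using Nat.mul_le_mul_right ℓ hFirst_card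
  have hc4 : 4 * (c * ℓ) ≤ n := by
    have := Nat.div_mul_le_self n (4 * ℓ)
    calc 4 * (c * ℓ) = c * (4 * ℓ) := by ring
      _ ≤ n := this
  have hb2' : Bad2.card ≤ n / 4 := Nat.le_div_iff_mul_le (by norm_num) |>.mpr
    (le_trans (Nat.mul_le_mul_right 4 hb2) (by omega))
  -- half set
  set Half : Finset (Fin n) := Finset.univ.filter (fun m : Fin n => n < 2 * ((m : ℕ) + 1))
    with hHalf
  set Low : Finset (Fin n) := Finset.univ.filter (fun m : Fin n => ¬ n < 2 * ((m : ℕ) + 1))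
    with hLow
  have hsplit : Half.card + Low.card = n := by
    rw [hHalf, hLow]
    simpa using Finset.card_filter_add_card_filter_not
      (s := (Finset.univ : Finset (Fin n))) (p := fun m : Fin n => n < 2 * ((m : ℕ) + 1))
  have hLow_card : Low.card ≤ n / 2 := by
    have h := Finset.card_le_card_of_injOn (s := Low) (t := Finset.range (n / 2))
      (fun k : Fin n => (k : ℕ))
      (fun k hk => Finset.mem_range.mpr (show (k:ℕ) < n / 2 by have := (Finset.mem_filter.mp hk).2; omega))
      (fun a _ b _ h => Fin.val_injective h)
    simpa using h
  have hHalf_card : n - n / 2 ≤ Half.card := by omega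
  -- existence
  have hlt : Bad1.card + Bad2.card < Half.card := by omega
  have hns : ¬ Half ⊆ Bad1 ∪ Bad2 := by
    intro h
    have := (Finset.card_le_card h).trans (Finset.card_union_le _ _)
    omega
  obtain ⟨m, hmH, hmB⟩ := Finset.not_subset.mp hns
  refine ⟨m, ?_, ?_, ?_⟩
  · exact (Finset.mem_filter.mp hmH).2
  · ext k
    simp only [Set.mem_inter_iff, Set.mem_setOf_eq, Set.mem_empty_iff_false, iff_false,
      not_and]
    intro hk hklt
    have hmBck : m ∈ Bck k := by
      rw [hBck]
      exact Finset.mem_filter.mpr ⟨Finset.mem_univ _, hk⟩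
    exact absurd (Finset.mem_union.mpr (Or.inr (Finset.mem_biUnion.mpr
      ⟨k, Finset.mem_filter.mpr ⟨Finset.mem_univ _, hklt⟩, hmBck⟩))) hmB
  · rw [hfwd_card]
    by_contra h
    exact hmB (Finset.mem_union.mpr (Or.inl (Finset.mem_filter.mpr
      ⟨Finset.mem_univ _, by omega⟩)))
end

section
/- Let L ≤ m < n be natural numbers and let J ⊆ {L, L+1, …, n−1}. Then there exist functions f : (J → 𝒫) → M₂(ℂ) → 𝒫 and g : ({0,…,n−1}∖J → 𝒫) → (Fin L → M₂(ℂ)) → 𝒫 such that for all Pauli operators P₀,…,P_{n−1} ∈ 𝒫 and all Clifford unitaries C₁,…,C_L, D: |tr( (P_{n−1}⋯P_m) · D · (P_{m−1}⋯P_L) · (P_{L−1}C_L)(P_{L−2}C_{L−1})⋯(P₀C₁) )| = |tr( P · D · Q · C_L⋯C₁ )|, where P = f((P_j)_{j∈J}, D) and Q = g((P_j)_{j∉J}, (C₁,…,C_L)). In particular, P depends only on the Paulis with indices in J and on D, while Q depends only on the Paulis with indices outside J and on C₁,…,C_L. All products are taken with larger-index factors on the left. -/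
open Matrix
noncomputable section
abbrev M2 := Matrix (Fin 2) (Fin 2) ℂ
def PX : M2 := !![0, 1; 1, 0]
def PY : M2 := !![0, -Complex.I; Complex.I, 0]
def PZ : M2 := !![1, 0; 0, -1]
/-- The Pauli set `𝒫 = {1, X, Y, Z}`. -/
def PauliSet : Set M2 := {1, PX, PY, PZ}

def PhaseEq (A B : M2) : Prop := ∃ α : ℂ, ‖α‖ = 1 ∧ A = α • B

lemma peq_refl (A : M2) : PhaseEq A A := ⟨1, by simp, (one_smul _ _).symm⟩

lemma peq_trans {A B C : M2} (h1 : PhaseEq A B) (h2 : PhaseEq B C) : PhaseEq A C := by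
  obtain ⟨a, ha, rfl⟩ := h1; obtain ⟨b, hb, rfl⟩ := h2
  exact ⟨a * b, by simp [_root_.map_mul, ha, hb], smul_smul a b C⟩

lemma peq_symm {A B : M2} (h : PhaseEq A B) : PhaseEq B A := by
  obtain ⟨a, ha, rfl⟩ := h
  have h0 : a ≠ 0 := by intro h0; simp [h0] at ha
  exact ⟨a⁻¹, by simp [map_inv₀, ha], by rw [inv_smul_smul₀ h0]⟩

lemma peq_mul {A B A' B' : M2} (h1 : PhaseEq A B) (h2 : PhaseEq A' B') :
    PhaseEq (A * A') (B * B') := by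
  obtain ⟨a, ha, rfl⟩ := h1; obtain ⟨b, hb, rfl⟩ := h2
  exact ⟨a * b, by simp [_root_.map_mul, ha, hb], by rw [smul_mul_assoc, mul_smul_comm, smul_smul]⟩

lemma peq_trace_abs {A B : M2} (h : PhaseEq A B) :
    ‖A.trace‖ = ‖B.trace‖ := by
  obtain ⟨a, ha, rfl⟩ := h
  rw [trace_smul, smul_eq_mul, norm_mul, ha, one_mul]

lemma one_mem_pauli : (1 : M2) ∈ PauliSet := by simp [PauliSet]

lemma pauli_cases {P : M2} (h : P ∈ PauliSet) : P = 1 ∨ P = PX ∨ P = PY ∨ P = PZ := by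
  simpa [PauliSet] using h

lemma hXX : PX * PX = (1 : M2) := by
  ext i j; fin_cases i <;> fin_cases j <;>
    simp [PX, Matrix.mul_apply, Fin.sum_univ_two, Matrix.one_apply]
lemma hYY : PY * PY = (1 : M2) := by
  ext i j; fin_cases i <;> fin_cases j <;>
    simp [PY, Matrix.mul_apply, Fin.sum_univ_two, Matrix.one_apply]
lemma hZZ : PZ * PZ = (1 : M2) := by
  ext i j; fin_cases i <;> fin_cases j <;>
    simp [PZ, Matrix.mul_apply, Fin.sum_univ_two, Matrix.one_apply]
lemma hXY : PX * PY = Complex.I • PZ := by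
  ext i j; fin_cases i <;> fin_cases j <;>
    simp [PX, PY, PZ, Matrix.mul_apply, Fin.sum_univ_two]
lemma hYX : PY * PX = (-Complex.I) • PZ := by
  ext i j; fin_cases i <;> fin_cases j <;>
    simp [PX, PY, PZ, Matrix.mul_apply, Fin.sum_univ_two]
lemma hYZ : PY * PZ = Complex.I • PX := by
  ext i j; fin_cases i <;> fin_cases j <;>
    simp [PX, PY, PZ, Matrix.mul_apply, Fin.sum_univ_two]
lemma hZY : PZ * PY = (-Complex.I) • PX := by
  ext i j; fin_cases i <;> fin_cases j <;>
    simp [PX, PY, PZ, Matrix.mul_apply, Fin.sum_univ_two]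
lemma hZX : PZ * PX = Complex.I • PY := by
  ext i j; fin_cases i <;> fin_cases j <;>
    simp [PX, PY, PZ, Matrix.mul_apply, Fin.sum_univ_two]
lemma hXZ : PX * PZ = (-Complex.I) • PY := by
  ext i j; fin_cases i <;> fin_cases j <;>
    simp [PX, PY, PZ, Matrix.mul_apply, Fin.sum_univ_two]

lemma pauli_mul {P Q : M2} (hP : P ∈ PauliSet) (hQ : Q ∈ PauliSet) :
    ∃ R ∈ PauliSet, PhaseEq (P * Q) R := by
  rcases pauli_cases hP with rfl | rfl | rfl | rfl <;>
    rcases pauli_cases hQ with rfl | rfl | rfl | rfl <;>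
    simp only [one_mul, mul_one, hXX, hXY, hXZ, hYX, hYY, hYZ, hZX, hZY, hZZ] <;>
    first
      | exact ⟨1, one_mem_pauli, peq_refl _⟩
      | exact ⟨PX, by simp [PauliSet], peq_refl _⟩
      | exact ⟨PY, by simp [PauliSet], peq_refl _⟩
      | exact ⟨PZ, by simp [PauliSet], peq_refl _⟩
      | exact ⟨PX, by simp [PauliSet], _, by simp, rfl⟩
      | exact ⟨PY, by simp [PauliSet], _, by simp, rfl⟩
      | exact ⟨PZ, by simp [PauliSet], _, by simp, rfl⟩

lemma pauli_comm {P Q : M2} (hP : P ∈ PauliSet) (hQ : Q ∈ PauliSet) :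
    PhaseEq (P * Q) (Q * P) := by
  rcases pauli_cases hP with rfl | rfl | rfl | rfl <;>
    rcases pauli_cases hQ with rfl | rfl | rfl | rfl <;>
    (try simp only [one_mul, mul_one]) <;>
    first
      | exact peq_refl _
      | { refine ⟨-1, by simp, ?_⟩
          simp only [hXY, hYX, hXZ, hZX, hYZ, hZY, smul_smul]
          norm_num }
/-- A 2×2 unitary is Clifford if it maps Paulis to Paulis up to a unit phase,
under conjugation. -/
def IsClifford (U : M2) : Prop :=
  U ∈ Matrix.unitaryGroup (Fin 2) ℂ ∧
  ∀ P ∈ PauliSet, ∃ Q ∈ PauliSet, ∃ α : ℂ, ‖α‖ = 1 ∧ U * P * Uᴴ = α • Q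

lemma unit_inv_eq {U : M2} (h : U ∈ Matrix.unitaryGroup (Fin 2) ℂ) : U⁻¹ = Uᴴ := by
  apply Matrix.inv_eq_left_inv
  rw [← Matrix.star_eq_conjTranspose]
  exact Matrix.mem_unitaryGroup_iff'.mp h

lemma unit_mul_inv {U : M2} (h : U ∈ Matrix.unitaryGroup (Fin 2) ℂ) : U * U⁻¹ = 1 := by
  rw [unit_inv_eq h, ← Matrix.star_eq_conjTranspose]
  exact Matrix.mem_unitaryGroup_iff.mp h

lemma unit_inv_mul {U : M2} (h : U ∈ Matrix.unitaryGroup (Fin 2) ℂ) : U⁻¹ * U = 1 := by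
  rw [unit_inv_eq h, ← Matrix.star_eq_conjTranspose]
  exact Matrix.mem_unitaryGroup_iff'.mp h

lemma clifford_conj {D P : M2} (hD : IsClifford D) (hP : P ∈ PauliSet) :
    ∃ Q ∈ PauliSet, PhaseEq (D * P * D⁻¹) Q := by
  obtain ⟨Q, hQ, α, hα, hEq⟩ := hD.2 P hP
  exact ⟨Q, hQ, α, hα, by rw [unit_inv_eq hD.1, hEq]⟩

lemma clifford_push {C P : M2} (hC : IsClifford C) (hP : P ∈ PauliSet) :
    ∃ Q ∈ PauliSet, PhaseEq (C * P) (Q * C) := by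
  obtain ⟨Q, hQ, α, hα, hEq⟩ := hC.2 P hP
  refine ⟨Q, hQ, α, hα, ?_⟩
  have h1 : Cᴴ * C = 1 := by
    rw [← Matrix.star_eq_conjTranspose]; exact Matrix.mem_unitaryGroup_iff'.mp hC.1
  calc C * P = C * P * (Cᴴ * C) := by rw [h1, mul_one]
    _ = (C * P * Cᴴ) * C := by rw [mul_assoc, mul_assoc, mul_assoc]
    _ = (α • Q) * C := by rw [hEq]
    _ = α • (Q * C) := smul_mul_assoc α Q C

/-- product of a list of Paulis is phase-equal to a Pauli -/
lemma prod_pauli : ∀ (l : List M2), (∀ x ∈ l, x ∈ PauliSet) → ∃ R ∈ PauliSet, PhaseEq l.prod R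
  | [], _ => ⟨1, one_mem_pauli, by simp [peq_refl]⟩
  | a :: t, h => by
    obtain ⟨R, hR, hpe⟩ := prod_pauli t (fun x hx => h x (List.mem_cons_of_mem a hx))
    obtain ⟨S, hS, hpe2⟩ := pauli_mul (h a (List.mem_cons_self)) hR
    exact ⟨S, hS, peq_trans (by simpa using peq_mul (peq_refl a) hpe) hpe2⟩

/-- a Pauli phase-commutes past a list product of Paulis -/
lemma pauli_comm_prod {z : M2} (hz : z ∈ PauliSet) :
    ∀ (l : List M2), (∀ x ∈ l, x ∈ PauliSet) → PhaseEq (z * l.prod) (l.prod * z)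
  | [], _ => by simp [peq_refl]
  | a :: t, h => by
    have ha := h a (List.mem_cons_self)
    have ht := fun x hx => h x (List.mem_cons_of_mem a hx)
    have step1 : PhaseEq (z * (a :: t).prod) ((a * z) * t.prod) := by
      rw [List.prod_cons, ← mul_assoc]
      exact peq_mul (pauli_comm hz ha) (peq_refl _)
    have step2 : PhaseEq ((a * z) * t.prod) (a * (t.prod * z)) := by
      rw [mul_assoc]
      exact peq_mul (peq_refl a) (pauli_comm_prod hz t ht)
    have : PhaseEq (z * (a :: t).prod) (a * (t.prod * z)) := peq_trans step1 step2
    simpa [List.prod_cons, mul_assoc] using this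

/-- interleaving: prod of (y i * z i) is phase-equal to (prod y) * (prod z) over range k. -/
lemma interleave (y z : ℕ → M2) :
    ∀ (k : ℕ), (∀ i < k, y i ∈ PauliSet) → (∀ i < k, z i ∈ PauliSet) →
    PhaseEq (((List.range k).map fun i => y i * z i).prod)
      ((((List.range k).map y).prod) * (((List.range k).map z).prod))
  | 0, _, _ => by simp [peq_refl]
  | (k+1), hy, hz => by
    have ih := interleave y z k (fun i hi => hy i (Nat.lt_succ_of_lt hi))
      (fun i hi => hz i (Nat.lt_succ_of_lt hi))
    have hzmem : ∀ x ∈ (List.range k).map z, x ∈ PauliSet := by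
      intro x hx
      obtain ⟨i, hi, rfl⟩ := List.mem_map.mp hx
      exact hz i (Nat.lt_succ_of_lt (List.mem_range.mp hi))
    rw [List.range_succ]
    simp only [List.map_append, List.prod_append, List.map_cons, List.map_nil,
      List.prod_cons, List.prod_nil, mul_one]
    -- goal: PhaseEq (X * (y k * z k)) ((Y * y k) * (Z * z k))
    have c1 : PhaseEq (((List.range k).map fun i => y i * z i).prod * (y k * z k))
        ((((List.range k).map y).prod * ((List.range k).map z).prod) * (y k * z k)) :=
      peq_mul ih (peq_refl _)
    have c2 : PhaseEq ((((List.range k).map y).prod * ((List.range k).map z).prod) * (y k * z k))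
        ((((List.range k).map y).prod * y k) * (((List.range k).map z).prod * z k)) := by
      have hcomm : PhaseEq (y k * ((List.range k).map z).prod)
          (((List.range k).map z).prod * y k) :=
        pauli_comm_prod (hy k (Nat.lt_succ_self k)) _ hzmem
      have hmid : PhaseEq ((((List.range k).map y).prod * (((List.range k).map z).prod * y k)) * z k)
          ((((List.range k).map y).prod * (y k * ((List.range k).map z).prod)) * z k) :=
        peq_mul (peq_mul (peq_refl _) (peq_symm hcomm)) (peq_refl _)
      have e1 : (((List.range k).map y).prod * ((List.range k).map z).prod) * (y k * z k)
          = (((List.range k).map y).prod * (((List.range k).map z).prod * y k)) * z k := by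
        simp only [mul_assoc]
      have e2 : (((List.range k).map y).prod * y k) * (((List.range k).map z).prod * z k)
          = (((List.range k).map y).prod * (y k * ((List.range k).map z).prod)) * z k := by
        simp only [mul_assoc]
      rw [e1, e2]; exact hmid
    exact peq_trans c1 c2
/-- The descending-index product `f (b-1) · f (b-2) · ⋯ · f a`
(larger-index factors on the left). -/
def dprod {M : Type*} [Monoid M] (f : ℕ → M) (a b : ℕ) : M :=
  ((List.range (b - a)).map fun i => f (b - 1 - i)).prod

lemma dprod_succ {M : Type*} [Monoid M] (f : ℕ → M) {a b : ℕ} (h : a ≤ b) :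
    dprod f a (b + 1) = f b * dprod f a b := by
  unfold dprod
  have h1 : b + 1 - a = (b - a) + 1 := by omega
  rw [h1, List.range_succ_eq_map]
  simp only [List.map_cons, List.prod_cons, Nat.add_sub_cancel, List.map_map]
  congr 2
  apply List.map_congr_left
  intro i _
  simp only [Function.comp_apply]
  congr 1
  omega

lemma dprod_congr {M : Type*} [Monoid M] {f g : ℕ → M} {a b : ℕ}
    (h : ∀ j, a ≤ j → j < b → f j = g j) : dprod f a b = dprod g a b := by
  unfold dprod
  congr 1
  apply List.map_congr_left
  intro i hi
  rw [List.mem_range] at hi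
  exact h _ (by omega) (by omega)

lemma dprod_mem_submonoid {S : Submonoid M2} {f : ℕ → M2} {a b : ℕ}
    (h : ∀ j, a ≤ j → j < b → f j ∈ S) : dprod f a b ∈ S := by
  apply list_prod_mem
  intro x hx
  obtain ⟨i, hi, rfl⟩ := List.mem_map.mp hx
  rw [List.mem_range] at hi
  exact h _ (by omega) (by omega)

/-- pushing a Pauli left through a product of Cliffords -/
lemma dprod_push {c : ℕ → M2} {L : ℕ} (hc : ∀ t, 1 ≤ t → t ≤ L → IsClifford (c t))
    {X : M2} (hX : X ∈ PauliSet) :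
    ∃ Y ∈ PauliSet, PhaseEq (dprod c 1 (L + 1) * X) (Y * dprod c 1 (L + 1)) := by
  induction L with
  | zero =>
    refine ⟨X, hX, ?_⟩
    have : dprod c 1 1 = 1 := by simp [dprod]
    rw [this, one_mul, mul_one]; exact peq_refl _
  | succ k ih =>
    obtain ⟨Y, hY, hpe⟩ := ih (fun t h1 h2 => hc t h1 (by omega))
    obtain ⟨Z, hZ, hpe2⟩ := clifford_push (hc (k+1) (by omega) le_rfl) hY
    refine ⟨Z, hZ, ?_⟩
    rw [dprod_succ c (by omega : 1 ≤ k + 1)]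
    have p1 : PhaseEq (c (k+1) * dprod c 1 (k+1) * X) (c (k+1) * (Y * dprod c 1 (k+1))) := by
      rw [mul_assoc]; exact peq_mul (peq_refl _) hpe
    have p2 : PhaseEq (c (k+1) * (Y * dprod c 1 (k+1))) (Z * (c (k+1) * dprod c 1 (k+1))) := by
      rw [← mul_assoc, ← mul_assoc]; exact peq_mul hpe2 (peq_refl _)
    exact peq_trans p1 p2
/-- extracting Paulis from an alternating Pauli–Clifford chain -/
lemma E_push (p c : ℕ → M2) :
    ∀ k, (∀ j, j < k → p j ∈ PauliSet) → (∀ t, 1 ≤ t → t ≤ k → IsClifford (c t)) →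
    ∃ Q ∈ PauliSet,
      PhaseEq (((List.range k).map fun i => p (k - 1 - i) * c (k - i)).prod)
        (Q * dprod c 1 (k + 1)) := by
  intro k
  induction k with
  | zero =>
    intro _ _
    refine ⟨1, one_mem_pauli, ?_⟩
    have h1 : dprod c 1 1 = 1 := by simp [dprod]
    simp [h1]; exact peq_refl _
  | succ k ih =>
    intro hp hc
    obtain ⟨Q, hQ, hpe⟩ := ih (fun j hj => hp j (by omega)) (fun t h1 h2 => hc t h1 (by omega))
    obtain ⟨Q', hQ', hp2⟩ := clifford_push (hc (k+1) (by omega) le_rfl) hQ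
    obtain ⟨R, hR, hp3⟩ := pauli_mul (hp k (by omega)) hQ'
    refine ⟨R, hR, ?_⟩
    have hsplit : ((List.range (k+1)).map fun i => p (k + 1 - 1 - i) * c (k + 1 - i)).prod
        = (p k * c (k+1)) * ((List.range k).map fun i => p (k - 1 - i) * c (k - i)).prod := by
      rw [List.range_succ_eq_map]
      simp only [List.map_cons, List.prod_cons, List.map_map, Nat.add_sub_cancel,
        Nat.sub_zero]
      congr 2
      apply List.map_congr_left
      intro i _
      simp only [Function.comp_apply]
      simp only [Nat.succ_eq_add_one]
      rw [Nat.succ_sub_succ, Nat.sub_sub, Nat.add_comm 1 i]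
    rw [hsplit, dprod_succ c (by omega : 1 ≤ k + 1)]
    have a1 : PhaseEq ((p k * c (k+1)) * ((List.range k).map fun i => p (k-1-i) * c (k-i)).prod)
        ((p k * c (k+1)) * (Q * dprod c 1 (k+1))) := peq_mul (peq_refl _) hpe
    have a2 : (p k * c (k+1)) * (Q * dprod c 1 (k+1))
        = (p k * (c (k+1) * Q)) * dprod c 1 (k+1) := by simp only [mul_assoc]
    have a3 : PhaseEq ((p k * (c (k+1) * Q)) * dprod c 1 (k+1))
        ((p k * (Q' * c (k+1))) * dprod c 1 (k+1)) :=
      peq_mul (peq_mul (peq_refl _) hp2) (peq_refl _)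
    have a4 : (p k * (Q' * c (k+1))) * dprod c 1 (k+1)
        = (p k * Q') * (c (k+1) * dprod c 1 (k+1)) := by simp only [mul_assoc]
    have a5 : PhaseEq ((p k * Q') * (c (k+1) * dprod c 1 (k+1)))
        (R * (c (k+1) * dprod c 1 (k+1))) := peq_mul hp3 (peq_refl _)
    exact peq_trans a1 (a2 ▸ peq_trans a3 (a4 ▸ a5))

open Classical in
/-- canonical Pauli representative of a matrix (up to phase), defaulting to 1 -/
def repP (A : M2) : {A : M2 // A ∈ PauliSet} :=
  if h : ∃ R, R ∈ PauliSet ∧ PhaseEq A R then ⟨h.choose, h.choose_spec.1⟩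
  else ⟨1, one_mem_pauli⟩

lemma repP_spec {A : M2} (h : ∃ R ∈ PauliSet, PhaseEq A R) : PhaseEq A ↑(repP A) := by
  have h' : ∃ R, R ∈ PauliSet ∧ PhaseEq A R := h
  rw [repP, dif_pos h']
  exact h'.choose_spec.2

def fsel (J : Finset ℕ) (PJ : {j // j ∈ J} → {A : M2 // A ∈ PauliSet}) (j : ℕ) : M2 :=
  if h : j ∈ J then (PJ ⟨j, h⟩ : M2) else 1

def gsel (n : ℕ) (J : Finset ℕ) (PN : {j // j < n ∧ j ∉ J} → {A : M2 // A ∈ PauliSet})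
    (j : ℕ) : M2 :=
  if h : j < n ∧ j ∉ J then (PN ⟨j, h⟩ : M2) else 1

def csel (L : ℕ) (Cv : Fin L → M2) (s : ℕ) : M2 :=
  if h : s - 1 < L then Cv ⟨s - 1, h⟩ else 1

lemma fsel_mem (J : Finset ℕ) (PJ : {j // j ∈ J} → {A : M2 // A ∈ PauliSet}) (j : ℕ) :
    fsel J PJ j ∈ PauliSet := by
  unfold fsel; split_ifs with h
  · exact (PJ ⟨j, h⟩).2
  · exact one_mem_pauli

lemma gsel_mem (n : ℕ) (J : Finset ℕ) (PN : {j // j < n ∧ j ∉ J} → {A : M2 // A ∈ PauliSet})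
    (j : ℕ) : gsel n J PN j ∈ PauliSet := by
  unfold gsel; split_ifs with h
  · exact (PN ⟨j, h⟩).2
  · exact one_mem_pauli

lemma key (n L m : ℕ) (hLm : L ≤ m) (hmn : m < n)
    (J : Finset ℕ) (hJ : ∀ j ∈ J, L ≤ j ∧ j < n)
    (P : ℕ → M2) (hP : ∀ j, j < n → P j ∈ PauliSet)
    (C : ℕ → M2) (hC : ∀ t, 1 ≤ t → t ≤ L → IsClifford (C t))
    (D : M2) (hD : IsClifford D)
    (PJ0 : {j // j ∈ J} → {A : M2 // A ∈ PauliSet})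
    (PN0 : {j // j < n ∧ j ∉ J} → {A : M2 // A ∈ PauliSet})
    (Cv0 : Fin L → M2)
    (hPJ0 : ∀ (j : ℕ) (h : j ∈ J), (PJ0 ⟨j, h⟩ : M2) = P j)
    (hPN0 : ∀ (j : ℕ) (h : j < n ∧ j ∉ J), (PN0 ⟨j, h⟩ : M2) = P j)
    (hCv0 : ∀ t : Fin L, Cv0 t = C ((t : ℕ) + 1)) :
    ‖((dprod P m n * D * dprod P L m * ((List.range L).map fun i => P (L - 1 - i) * C (L - i)).prod).trace)‖
      = ‖(((repP (((List.range (n - m)).map fun i => fsel J PJ0 (n - 1 - i)).prod * (D * ((List.range (m - L)).map fun i => fsel J PJ0 (m - 1 - i)).prod * D⁻¹)) : M2) * D * (repP (((List.range (m - L)).map fun i => gsel n J PN0 (m - 1 - i)).prod * (((List.range L).map fun i => gsel n J PN0 (L - 1 - i) * csel L Cv0 (L - i)).prod * (dprod (csel L Cv0) 1 (L + 1))⁻¹) * (dprod (csel L Cv0) 1 (L + 1) * ((List.range (n - m)).map fun i => gsel n J PN0 (n - 1 - i)).prod * (dprod (csel L Cv0) 1 (L + 1))⁻¹)) : M2) *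 dprod C 1 (L + 1)).trace)‖ := by
  have hsA : dprod P m n
      = ((List.range (n - m)).map fun i =>
          fsel J PJ0 (n - 1 - i) * gsel n J PN0 (n - 1 - i)).prod := by
    unfold dprod
    congr 1
    apply List.map_congr_left
    intro i hi
    rw [List.mem_range] at hi
    have h1 : n - 1 - i < n := by omega
    unfold fsel gsel
    by_cases hj : n - 1 - i ∈ J
    · rw [dif_pos hj, dif_neg (by simp [hj]), mul_one, hPJ0]
    · rw [dif_neg hj, dif_pos ⟨h1, hj⟩, one_mul, hPN0]
  have hsB : dprod P L m
      = ((List.range (m - L)).map fun i =>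
          fsel J PJ0 (m - 1 - i) * gsel n J PN0 (m - 1 - i)).prod := by
    unfold dprod
    congr 1
    apply List.map_congr_left
    intro i hi
    rw [List.mem_range] at hi
    have h1 : m - 1 - i < n := by omega
    unfold fsel gsel
    by_cases hj : m - 1 - i ∈ J
    · rw [dif_pos hj, dif_neg (by simp [hj]), mul_one, hPJ0]
    · rw [dif_neg hj, dif_pos ⟨h1, hj⟩, one_mul, hPN0]
  have hsE : ((List.range L).map fun i => gsel n J PN0 (L - 1 - i) * csel L Cv0 (L - i)).prod = ((List.range L).map fun i => P (L - 1 - i) * C (L - i)).prod := by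
    apply congrArg
    apply List.map_congr_left
    intro i hi
    rw [List.mem_range] at hi
    have h1 : L - 1 - i < n := by omega
    have h2 : L - 1 - i ∉ J := fun hmem => by have := (hJ _ hmem).1; omega
    unfold gsel csel
    rw [dif_pos ⟨h1, h2⟩, hPN0, dif_pos (by omega : L - i - 1 < L), hCv0]
    rw [show ((⟨L - i - 1, by omega⟩ : Fin L) : ℕ) = L - i - 1 from rfl,
      Nat.sub_add_cancel (by omega : 1 ≤ L - i)]
  have hsC : dprod (csel L Cv0) 1 (L + 1) = dprod C 1 (L + 1) := by
    apply dprod_congr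
    intro s hs1 hs2
    unfold csel
    rw [dif_pos (by omega : s - 1 < L), hCv0,
      show ((⟨s - 1, by omega⟩ : Fin L) : ℕ) = s - 1 from rfl,
      Nat.sub_add_cancel hs1]
  -- Pauli representatives of the four sub-products
  obtain ⟨a, haP, pa⟩ := prod_pauli ((List.range (n - m)).map fun i => fsel J PJ0 (n - 1 - i))
    (by intro x hx; obtain ⟨i, _, rfl⟩ := List.mem_map.mp hx; exact fsel_mem _ _ _)
  obtain ⟨b, hbP, pb⟩ := prod_pauli ((List.range (m - L)).map fun i => fsel J PJ0 (m - 1 - i))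
    (by intro x hx; obtain ⟨i, _, rfl⟩ := List.mem_map.mp hx; exact fsel_mem _ _ _)
  obtain ⟨a', haP', pa'⟩ := prod_pauli ((List.range (n - m)).map fun i => gsel n J PN0 (n - 1 - i))
    (by intro x hx; obtain ⟨i, _, rfl⟩ := List.mem_map.mp hx; exact gsel_mem _ _ _ _)
  obtain ⟨b', hbP', pb'⟩ := prod_pauli ((List.range (m - L)).map fun i => gsel n J PN0 (m - 1 - i))
    (by intro x hx; obtain ⟨i, _, rfl⟩ := List.mem_map.mp hx; exact gsel_mem _ _ _ _)
  -- interleaving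
  have interA : PhaseEq (dprod P m n) (((List.range (n - m)).map fun i => fsel J PJ0 (n - 1 - i)).prod * ((List.range (n - m)).map fun i => gsel n J PN0 (n - 1 - i)).prod) := by
    rw [hsA]
    exact interleave _ _ (n - m) (fun i _ => fsel_mem _ _ _) (fun i _ => gsel_mem _ _ _ _)
  have interB : PhaseEq (dprod P L m) (((List.range (m - L)).map fun i => fsel J PJ0 (m - 1 - i)).prod * ((List.range (m - L)).map fun i => gsel n J PN0 (m - 1 - i)).prod) := by
    rw [hsB]
    exact interleave _ _ (m - L) (fun i _ => fsel_mem _ _ _) (fun i _ => gsel_mem _ _ _ _)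
  -- extract Paulis from the alternating chain
  obtain ⟨Q0, hQ0, pE⟩ := E_push P C L (fun j hj => hP j (by omega)) hC
  -- unitarity facts
  have hCCu : dprod C 1 (L + 1) ∈ Matrix.unitaryGroup (Fin 2) ℂ :=
    dprod_mem_submonoid (fun t h1 h2 => (hC t h1 (by omega)).1)
  have hCC1 : (dprod C 1 (L + 1))⁻¹ * dprod C 1 (L + 1) = 1 := unit_inv_mul hCCu
  have hCCr : dprod C 1 (L + 1) * (dprod C 1 (L + 1))⁻¹ = 1 := unit_mul_inv hCCu
  have hDc : ∀ x : M2, D⁻¹ * (D * x) = x := fun x => by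
    rw [← mul_assoc, unit_inv_mul hD.1, one_mul]
  have hCc : ∀ x : M2, (dprod C 1 (L + 1))⁻¹ * (dprod C 1 (L + 1) * x) = x := fun x => by
    rw [← mul_assoc, hCC1, one_mul]
  -- the f-side Pauli
  have hPex : ∃ R ∈ PauliSet, PhaseEq (((List.range (n - m)).map fun i => fsel J PJ0 (n - 1 - i)).prod * (D * ((List.range (m - L)).map fun i => fsel J PJ0 (m - 1 - i)).prod * D⁻¹)) R := by
    obtain ⟨d, hdP, pd⟩ := clifford_conj hD hbP
    obtain ⟨R, hR, pR⟩ := pauli_mul haP hdP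
    refine ⟨R, hR, ?_⟩
    have s1 : PhaseEq (((List.range (n - m)).map fun i => fsel J PJ0 (n - 1 - i)).prod * (D * ((List.range (m - L)).map fun i => fsel J PJ0 (m - 1 - i)).prod * D⁻¹)) (a * (D * b * D⁻¹)) :=
      peq_mul pa (peq_mul (peq_mul (peq_refl D) pb) (peq_refl _))
    exact peq_trans s1 (peq_trans (peq_mul (peq_refl a) pd) pR)
  have hPrep : PhaseEq (((List.range (n - m)).map fun i => fsel J PJ0 (n - 1 - i)).prod * (D * ((List.range (m - L)).map fun i => fsel J PJ0 (m - 1 - i)).prod * D⁻¹)) (repP (((List.range (n - m)).map fun i => fsel J PJ0 (n - 1 - i)).prod * (D * ((List.range (m - L)).map fun i => fsel J PJ0 (m - 1 - i)).prod * D⁻¹)) : M2) := repP_spec hPex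
  -- the g-side Pauli
  have hq1 : PhaseEq ((((List.range L).map fun i => P (L - 1 - i) * C (L - i)).prod) * (dprod C 1 (L + 1))⁻¹) Q0 := by
    have s : PhaseEq ((((List.range L).map fun i => P (L - 1 - i) * C (L - i)).prod) * (dprod C 1 (L + 1))⁻¹) ((Q0 * dprod C 1 (L + 1)) * (dprod C 1 (L + 1))⁻¹) := peq_mul pE (peq_refl _)
    have e : (Q0 * dprod C 1 (L + 1)) * (dprod C 1 (L + 1))⁻¹ = Q0 := by rw [mul_assoc, hCCr, mul_one]
    rw [e] at s
    exact s
  obtain ⟨Y, hY, pY⟩ := dprod_push hC haP'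
  have hq2 : PhaseEq (dprod C 1 (L + 1) * ((List.range (n - m)).map fun i => gsel n J PN0 (n - 1 - i)).prod * (dprod C 1 (L + 1))⁻¹) Y := by
    have s1 : PhaseEq (dprod C 1 (L + 1) * ((List.range (n - m)).map fun i => gsel n J PN0 (n - 1 - i)).prod * (dprod C 1 (L + 1))⁻¹) ((dprod C 1 (L + 1) * a') * (dprod C 1 (L + 1))⁻¹) :=
      peq_mul (peq_mul (peq_refl _) pa') (peq_refl _)
    have s2 : PhaseEq ((dprod C 1 (L + 1) * a') * (dprod C 1 (L + 1))⁻¹) ((Y * dprod C 1 (L + 1)) * (dprod C 1 (L + 1))⁻¹) :=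
      peq_mul pY (peq_refl _)
    have e : (Y * dprod C 1 (L + 1)) * (dprod C 1 (L + 1))⁻¹ = Y := by rw [mul_assoc, hCCr, mul_one]
    rw [e] at s2
    exact peq_trans s1 s2
  have hQex : ∃ R ∈ PauliSet, PhaseEq (((List.range (m - L)).map fun i => gsel n J PN0 (m - 1 - i)).prod * ((((List.range L).map fun i => P (L - 1 - i) * C (L - i)).prod) * (dprod C 1 (L + 1))⁻¹) * (dprod C 1 (L + 1) * ((List.range (n - m)).map fun i => gsel n J PN0 (n - 1 - i)).prod * (dprod C 1 (L + 1))⁻¹)) R := by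
    obtain ⟨S, hS, pS⟩ := pauli_mul hbP' hQ0
    obtain ⟨R, hR, pR⟩ := pauli_mul hS hY
    refine ⟨R, hR, ?_⟩
    have s1 : PhaseEq (((List.range (m - L)).map fun i => gsel n J PN0 (m - 1 - i)).prod * ((((List.range L).map fun i => P (L - 1 - i) * C (L - i)).prod) * (dprod C 1 (L + 1))⁻¹) * (dprod C 1 (L + 1) * ((List.range (n - m)).map fun i => gsel n J PN0 (n - 1 - i)).prod * (dprod C 1 (L + 1))⁻¹)) ((b' * Q0) * Y) := peq_mul (peq_mul pb' hq1) hq2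
    exact peq_trans s1 (peq_trans (peq_mul pS (peq_refl Y)) pR)
  have hrepEq : repP (((List.range (m - L)).map fun i => gsel n J PN0 (m - 1 - i)).prod * (((List.range L).map fun i => gsel n J PN0 (L - 1 - i) * csel L Cv0 (L - i)).prod * (dprod (csel L Cv0) 1 (L + 1))⁻¹) * (dprod (csel L Cv0) 1 (L + 1) * ((List.range (n - m)).map fun i => gsel n J PN0 (n - 1 - i)).prod * (dprod (csel L Cv0) 1 (L + 1))⁻¹)) = repP (((List.range (m - L)).map fun i => gsel n J PN0 (m - 1 - i)).prod * ((((List.range L).map fun i => P (L - 1 - i) * C (L - i)).prod) * (dprod C 1 (L + 1))⁻¹) * (dprod C 1 (L + 1) * ((List.range (n - m)).map fun i => gsel n J PN0 (n - 1 - i)).prod * (dprod C 1 (L + 1))⁻¹)) := by rw [hsE, hsC]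
  have hQrep : PhaseEq (((List.range (m - L)).map fun i => gsel n J PN0 (m - 1 - i)).prod * ((((List.range L).map fun i => P (L - 1 - i) * C (L - i)).prod) * (dprod C 1 (L + 1))⁻¹) * (dprod C 1 (L + 1) * ((List.range (n - m)).map fun i => gsel n J PN0 (n - 1 - i)).prod * (dprod C 1 (L + 1))⁻¹)) (repP (((List.range (m - L)).map fun i => gsel n J PN0 (m - 1 - i)).prod * (((List.range L).map fun i => gsel n J PN0 (L - 1 - i) * csel L Cv0 (L - i)).prod * (dprod (csel L Cv0) 1 (L + 1))⁻¹) * (dprod (csel L Cv0) 1 (L + 1) * ((List.range (n - m)).map fun i => gsel n J PN0 (n - 1 - i)).prod * (dprod (csel L Cv0) 1 (L + 1))⁻¹)) : M2) := by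
    rw [hrepEq]
    exact repP_spec hQex
  -- commuting A_N to the front
  have pcomm : PhaseEq (((List.range (n - m)).map fun i => fsel J PJ0 (n - 1 - i)).prod * ((List.range (n - m)).map fun i => gsel n J PN0 (n - 1 - i)).prod) (((List.range (n - m)).map fun i => gsel n J PN0 (n - 1 - i)).prod * ((List.range (n - m)).map fun i => fsel J PJ0 (n - 1 - i)).prod) :=
    peq_trans (peq_mul pa pa')
      (peq_trans (pauli_comm haP haP') (peq_symm (peq_mul pa' pa)))
  have pT : PhaseEq (dprod P m n * D * dprod P L m * ((List.range L).map fun i => P (L - 1 - i) * C (L - i)).prod) (((((List.range (n - m)).map fun i => gsel n J PN0 (n - 1 - i)).prod * ((List.range (n - m)).map fun i => fsel J PJ0 (n - 1 - i)).prod) * D * (((List.range (m - L)).map fun i => fsel J PJ0 (m - 1 - i)).prod * ((List.range (m - L)).map fun i => gsel n J PN0 (m - 1 - i)).prod)) * ((List.range L).map fun i => P (L - 1 - i) * C (L - i)).prod) :=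
    peq_mul (peq_mul (peq_mul (peq_trans interA pcomm) (peq_refl D)) interB)
      (peq_refl _)
  have eM : ((((List.range (n - m)).map fun i => gsel n J PN0 (n - 1 - i)).prod * ((List.range (n - m)).map fun i => fsel J PJ0 (n - 1 - i)).prod) * D * (((List.range (m - L)).map fun i => fsel J PJ0 (m - 1 - i)).prod * ((List.range (m - L)).map fun i => gsel n J PN0 (m - 1 - i)).prod)) * ((List.range L).map fun i => P (L - 1 - i) * C (L - i)).prod = ((List.range (n - m)).map fun i => gsel n J PN0 (n - 1 - i)).prod * (((List.range (n - m)).map fun i => fsel J PJ0 (n - 1 - i)).prod * (D * ((((List.range (m - L)).map fun i => fsel J PJ0 (m - 1 - i)).prod * ((List.range (m - L)).map fun i => gsel n J PN0 (m - 1 - i)).prod) * ((List.range L).map fun i => P (L - 1 - i) * C (L - i)).prod))) := by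
    simp only [mul_assoc]
  rw [eM] at pT
  have eKey : (((List.range (n - m)).map fun i => fsel J PJ0 (n - 1 - i)).prod * (D * ((((List.range (m - L)).map fun i => fsel J PJ0 (m - 1 - i)).prod * ((List.range (m - L)).map fun i => gsel n J PN0 (m - 1 - i)).prod) * ((List.range L).map fun i => P (L - 1 - i) * C (L - i)).prod))) * ((List.range (n - m)).map fun i => gsel n J PN0 (n - 1 - i)).prod = (((List.range (n - m)).map fun i => fsel J PJ0 (n - 1 - i)).prod * (D * ((List.range (m - L)).map fun i => fsel J PJ0 (m - 1 - i)).prod * D⁻¹)) * D * (((List.range (m - L)).map fun i => gsel n J PN0 (m - 1 - i)).prod * ((((List.range L).map fun i => P (L - 1 - i) * C (L - i)).prod) * (dprod C 1 (L + 1))⁻¹) * (dprod C 1 (L + 1) * ((List.range (n - m)).map fun i => gsel n J PN0 (n - 1 - i)).prod * (dprod C 1 (L + 1))⁻¹)) * dprod C 1 (L + 1) := by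
    simp only [mul_assoc, hDc, hCc, hCC1, mul_one]
  have pFinal : PhaseEq ((((List.range (n - m)).map fun i => fsel J PJ0 (n - 1 - i)).prod * (D * ((List.range (m - L)).map fun i => fsel J PJ0 (m - 1 - i)).prod * D⁻¹)) * D * (((List.range (m - L)).map fun i => gsel n J PN0 (m - 1 - i)).prod * ((((List.range L).map fun i => P (L - 1 - i) * C (L - i)).prod) * (dprod C 1 (L + 1))⁻¹) * (dprod C 1 (L + 1) * ((List.range (n - m)).map fun i => gsel n J PN0 (n - 1 - i)).prod * (dprod C 1 (L + 1))⁻¹)) * dprod C 1 (L + 1))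
      ((repP (((List.range (n - m)).map fun i => fsel J PJ0 (n - 1 - i)).prod * (D * ((List.range (m - L)).map fun i => fsel J PJ0 (m - 1 - i)).prod * D⁻¹)) : M2) * D * (repP (((List.range (m - L)).map fun i => gsel n J PN0 (m - 1 - i)).prod * (((List.range L).map fun i => gsel n J PN0 (L - 1 - i) * csel L Cv0 (L - i)).prod * (dprod (csel L Cv0) 1 (L + 1))⁻¹) * (dprod (csel L Cv0) 1 (L + 1) * ((List.range (n - m)).map fun i => gsel n J PN0 (n - 1 - i)).prod * (dprod (csel L Cv0) 1 (L + 1))⁻¹)) : M2) * dprod C 1 (L + 1)) :=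
    peq_mul (peq_mul (peq_mul hPrep (peq_refl D)) hQrep) (peq_refl _)
  calc ‖((dprod P m n * D * dprod P L m * ((List.range L).map fun i => P (L - 1 - i) * C (L - i)).prod).trace)‖
      = ‖((((List.range (n - m)).map fun i => gsel n J PN0 (n - 1 - i)).prod * (((List.range (n - m)).map fun i => fsel J PJ0 (n - 1 - i)).prod * (D * ((((List.range (m - L)).map fun i => fsel J PJ0 (m - 1 - i)).prod * ((List.range (m - L)).map fun i => gsel n J PN0 (m - 1 - i)).prod) * ((List.range L).map fun i => P (L - 1 - i) * C (L - i)).prod)))).trace)‖ := peq_trace_abs pT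
    _ = ‖(((((List.range (n - m)).map fun i => fsel J PJ0 (n - 1 - i)).prod * (D * ((((List.range (m - L)).map fun i => fsel J PJ0 (m - 1 - i)).prod * ((List.range (m - L)).map fun i => gsel n J PN0 (m - 1 - i)).prod) * ((List.range L).map fun i => P (L - 1 - i) * C (L - i)).prod))) * ((List.range (n - m)).map fun i => gsel n J PN0 (n - 1 - i)).prod).trace)‖ := by rw [Matrix.trace_mul_comm]
    _ = ‖(((((List.range (n - m)).map fun i => fsel J PJ0 (n - 1 - i)).prod * (D * ((List.range (m - L)).map fun i => fsel J PJ0 (m - 1 - i)).prod * D⁻¹)) * D * (((List.range (m - L)).map fun i => gsel n J PN0 (m - 1 - i)).prod * ((((List.range L).map fun i => P (L - 1 - i) * C (L - i)).prod) * (dprod C 1 (L + 1))⁻¹) * (dprod C 1 (L + 1) * ((List.range (n - m)).map fun i => gsel n J PN0 (n - 1 - i)).prod * (dprod C 1 (L + 1))⁻¹)) * dprod C 1 (L + 1)).trace)‖ := by rw [eKey]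
    _ = ‖(((repP (((List.range (n - m)).map fun i => fsel J PJ0 (n - 1 - i)).prod * (D * ((List.range (m - L)).map fun i => fsel J PJ0 (m - 1 - i)).prod * D⁻¹)) : M2) * D * (repP (((List.range (m - L)).map fun i => gsel n J PN0 (m - 1 - i)).prod * (((List.range L).map fun i => gsel n J PN0 (L - 1 - i) * csel L Cv0 (L - i)).prod * (dprod (csel L Cv0) 1 (L + 1))⁻¹) * (dprod (csel L Cv0) 1 (L + 1) * ((List.range (n - m)).map fun i => gsel n J PN0 (n - 1 - i)).prod * (dprod (csel L Cv0) 1 (L + 1))⁻¹)) : M2) * dprod C 1 (L + 1)).trace)‖ :=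
        peq_trace_abs pFinal

/-- Let `L ≤ m < n` and `J ⊆ {L, …, n−1}`. There exist functions
`f : (J → 𝒫) → M₂(ℂ) → 𝒫` and `g : ({0,…,n−1}∖J → 𝒫) → (Fin L → M₂(ℂ)) → 𝒫` such that
for all Paulis `P₀,…,P_{n−1} ∈ 𝒫` and all Clifford unitaries `C₁,…,C_L, D`,
`|tr((P_{n−1}⋯P_m)·D·(P_{m−1}⋯P_L)·(P_{L−1}C_L)⋯(P₀C₁))| = |tr(P·D·Q·C_L⋯C₁)|`
with `P = f((P_j)_{j∈J}, D)` and `Q = g((P_j)_{j∉J}, (C₁,…,C_L))`. -/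
theorem stmt3 (n L m : ℕ) (hLm : L ≤ m) (hmn : m < n)
    (J : Finset ℕ) (hJ : ∀ j ∈ J, L ≤ j ∧ j < n) :
    ∃ f : ({j // j ∈ J} → {A : M2 // A ∈ PauliSet}) → M2 → {A : M2 // A ∈ PauliSet},
    ∃ g : ({j // j < n ∧ j ∉ J} → {A : M2 // A ∈ PauliSet}) →
        (Fin L → M2) → {A : M2 // A ∈ PauliSet},
      ∀ (P : ℕ → M2) (hP : ∀ j, j < n → P j ∈ PauliSet)
        (C : ℕ → M2) (_hC : ∀ t, 1 ≤ t → t ≤ L → IsClifford (C t))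
        (D : M2) (_hD : IsClifford D),
        ‖((dprod P m n * D * dprod P L m *
            ((List.range L).map fun i => P (L - 1 - i) * C (L - i)).prod).trace)‖
          = ‖
            ((((f (fun j => ⟨P j.1, hP j.1 (hJ j.1 j.2).2⟩) D : {A : M2 // A ∈ PauliSet}) : M2)
              * D *
              ((g (fun j => ⟨P j.1, hP j.1 j.2.1⟩) (fun t => C ((t : ℕ) + 1)) :
                {A : M2 // A ∈ PauliSet}) : M2) *
              dprod C 1 (L + 1)).trace)‖ := by
  refine ⟨fun PJ D => repP (((List.range (n - m)).map fun i => fsel J PJ (n - 1 - i)).prod * (D * ((List.range (m - L)).map fun i => fsel J PJ (m - 1 - i)).prod * D⁻¹)),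
    fun PN Cv => repP (((List.range (m - L)).map fun i => gsel n J PN (m - 1 - i)).prod * (((List.range L).map fun i => gsel n J PN (L - 1 - i) * csel L Cv (L - i)).prod * (dprod (csel L Cv) 1 (L + 1))⁻¹) * (dprod (csel L Cv) 1 (L + 1) * ((List.range (n - m)).map fun i => gsel n J PN (n - 1 - i)).prod * (dprod (csel L Cv) 1 (L + 1))⁻¹)), ?_⟩
  intro P hP C hC D hD
  exact key n L m hLm hmn J hJ P hP C hC D hD
    (fun j => ⟨P j.1, hP j.1 (hJ j.1 j.2).2⟩)
    (fun j => ⟨P j.1, hP j.1 j.2.1⟩)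
    (fun t => C ((t : ℕ) + 1))
    (fun j h => rfl) (fun j h => rfl) (fun t => rfl)

end
end

section
/- Let C be a 2×2 Clifford unitary and let v := (1 ⊗ C)·Φ ∈ ℂ⁴. Among the 15 pairs (P_A, P_B) ∈ 𝒫 × 𝒫 with (P_A, P_B) ≠ (1, 1), exactly 3 satisfy ⟨v, (P_A ⊗ P_B)·v⟩ ∈ {+1, −1}, and the remaining 12 satisfy ⟨v, (P_A ⊗ P_B)·v⟩ = 0. -/
open Matrix Kronecker

noncomputable section

/-- The Bell state `Φ = (e₀⊗e₀ + e₁⊗e₁)/√2` as a vector on `ℂ² ⊗ ℂ² ≃ ℂ⁴`. -/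
def BellPhi : Fin 2 × Fin 2 → ℂ := fun p => if p.1 = p.2 then ((Real.sqrt 2)⁻¹ : ℝ) else 0

/-- The expectation `⟨v, (A ⊗ B)·v⟩` of a two-qubit observable `A ⊗ B` in a state `v`. -/
def pairExp (v : Fin 2 × Fin 2 → ℂ) (A B : M2) : ℂ :=
  ∑ p : Fin 2 × Fin 2, star (v p) * ((A ⊗ₖ B).mulVec v) p

namespace Stmt11Aux

/-! ### Distinctness of the Pauli matrices -/

lemma d1X : (1:M2) ≠ PX := by
  intro h; have := congr_fun (congr_fun h 0) 1
  simp [PX, Matrix.one_apply] at this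
lemma d1Y : (1:M2) ≠ PY := by
  intro h; have := congr_fun (congr_fun h 0) 1
  simp [PY, Matrix.one_apply, Complex.ext_iff] at this
lemma d1Z : (1:M2) ≠ PZ := by
  intro h; have := congr_fun (congr_fun h 1) 1
  simp [PZ, Matrix.one_apply, Complex.ext_iff] at this; norm_num at this
lemma dXY : PX ≠ PY := by
  intro h; have := congr_fun (congr_fun h 1) 0
  simp [PX, PY, Complex.ext_iff] at this
lemma dXZ : PX ≠ PZ := by
  intro h; have := congr_fun (congr_fun h 0) 1
  simp [PX, PZ, Complex.ext_iff] at this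
lemma dYZ : PY ≠ PZ := by
  intro h; have := congr_fun (congr_fun h 1) 0
  simp [PY, PZ, Complex.ext_iff] at this

/-! ### Hermiticity, traces, nonvanishing -/

lemma hermAll : ∀ P ∈ PauliSet, Pᴴ = P := by
  rintro P (rfl|rfl|rfl|rfl)
  · exact Matrix.conjTranspose_one
  · ext i j; fin_cases i <;> fin_cases j <;> simp [PX]
  · ext i j; fin_cases i <;> fin_cases j <;> simp [PY]
  · ext i j; fin_cases i <;> fin_cases j <;> simp [PZ]

lemma nz : ∀ P ∈ PauliSet, P ≠ 0 := by
  rintro P (rfl|rfl|rfl|rfl) h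
  · exact one_ne_zero h
  · have := congr_fun (congr_fun h 0) 1; simp [PX] at this
  · have := congr_fun (congr_fun h 1) 0; simp [PY, Complex.ext_iff] at this
  · have := congr_fun (congr_fun h 0) 0; simp [PZ] at this

lemma trX : PX.trace = 0 := by simp [PX, Matrix.trace_fin_two]
lemma trY : PY.trace = 0 := by simp [PY, Matrix.trace_fin_two]
lemma trZ : PZ.trace = 0 := by simp [PZ, Matrix.trace_fin_two]

/-! ### The Bell-state expectation as a matrix sum -/

lemma bell_vec (C : M2) :
    ((1 : M2) ⊗ₖ C).mulVec BellPhi = fun p => (((Real.sqrt 2)⁻¹ : ℝ) : ℂ) * C p.2 p.1 := by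
  funext p
  cases p with
  | mk i j =>
  simp [Matrix.mulVec, Matrix.kroneckerMap_apply, BellPhi, dotProduct,
    Fintype.sum_prod_type, Fin.sum_univ_two, Matrix.one_apply]
  fin_cases i <;> fin_cases j <;> simp <;> ring

lemma pairExp_eq (C A B : M2) :
    pairExp (((1 : M2) ⊗ₖ C).mulVec BellPhi) A B
      = (∑ i, ∑ k, A i k * (Cᴴ * B * C) i k) / 2 := by
  set r : ℂ := (((Real.sqrt 2)⁻¹ : ℝ) : ℂ) with hrdef
  have hsr : star r * r = 1/2 := by
    have : ((Real.sqrt 2)⁻¹ * (Real.sqrt 2)⁻¹ : ℝ) = 1/2 := by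
      rw [← mul_inv, Real.mul_self_sqrt (by norm_num : (0:ℝ) ≤ 2)]; norm_num
    rw [hrdef, Complex.star_def, Complex.conj_ofReal, ← Complex.ofReal_mul, this]
    norm_num
  have key : pairExp (((1 : M2) ⊗ₖ C).mulVec BellPhi) A B
      = (star r * r) * ∑ i, ∑ k, A i k * (Cᴴ * B * C) i k := by
    rw [pairExp, bell_vec C]
    simp only [Matrix.mulVec, dotProduct, Matrix.kroneckerMap_apply,
      Fintype.sum_prod_type, Fin.sum_univ_two, Matrix.mul_apply, Matrix.conjTranspose_apply,
      star_mul']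
    ring
  rw [key, hsr]; ring

/-! ### Pauli orthogonality sums -/

lemma S_one : ∀ A, (A = PX ∨ A = PY ∨ A = PZ) →
    (∑ i, ∑ k, A i k * (1:M2) i k) = 0 := by
  rintro A (rfl|rfl|rfl) <;>
    norm_num [PX, PY, PZ, Fin.sum_univ_two, Matrix.one_apply]

lemma S_diag_X : (∑ i, ∑ k, PX i k * PX i k) = 2 := by
  norm_num [PX, Fin.sum_univ_two]
lemma S_diag_Y : (∑ i, ∑ k, PY i k * PY i k) = -2 := by
  norm_num [PY, Fin.sum_univ_two]
lemma S_diag_Z : (∑ i, ∑ k, PZ i k * PZ i k) = 2 := by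
  norm_num [PZ, Fin.sum_univ_two]

lemma S_cross : ∀ A, (A = 1 ∨ A = PX ∨ A = PY ∨ A = PZ) →
    ∀ B, (B = PX ∨ B = PY ∨ B = PZ) → A ≠ B →
    (∑ i, ∑ k, A i k * B i k) = 0 := by
  rintro A (rfl|rfl|rfl|rfl) B (rfl|rfl|rfl) hne <;>
    first
      | exact absurd rfl hne
      | norm_num [PX, PY, PZ, Fin.sum_univ_two, Matrix.one_apply]

/-! ### Clifford conjugation -/

lemma exists_conj (C : M2) (hC : IsClifford C) (P : M2) (hP : P = PX ∨ P = PY ∨ P = PZ) :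
    ∃ Q, (Q = PX ∨ Q = PY ∨ Q = PZ) ∧ ∃ ε : ℂ, (ε = 1 ∨ ε = -1) ∧ Cᴴ * Q * C = ε • P := by
  have huL : Cᴴ * C = 1 := by
    have := hC.1
    rw [Matrix.mem_unitaryGroup_iff'] at this
    simpa [Matrix.star_eq_conjTranspose] using this
  have hPmem : P ∈ PauliSet := by rcases hP with rfl|rfl|rfl <;> simp [PauliSet]
  obtain ⟨Q, hQ, α, habs, heq⟩ := hC.2 P hPmem
  have hherm : (α • Q)ᴴ = α • Q := by
    rw [← heq, Matrix.conjTranspose_mul, Matrix.conjTranspose_mul,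
      Matrix.conjTranspose_conjTranspose, hermAll P hPmem, Matrix.mul_assoc]
  rw [Matrix.conjTranspose_smul, hermAll Q hQ] at hherm
  have hreal : star α = α := by
    have h0 : (star α - α) • Q = 0 := by rw [sub_smul, hherm, sub_self]
    rcases smul_eq_zero.mp h0 with h | h
    · exact sub_eq_zero.mp h
    · exact absurd h (nz Q hQ)
  have him : α.im = 0 := Complex.conj_eq_iff_im.mp (by rwa [← Complex.star_def])
  have hre : α = (α.re : ℂ) := by
    apply Complex.ext <;> simp [him]
  have hα : α = 1 ∨ α = -1 := by
    rw [hre, Complex.norm_real, Real.norm_eq_abs] at habs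
    rcases (abs_eq (by norm_num : (0:ℝ) ≤ 1)).mp habs with h | h <;>
      [left; right] <;> rw [hre, h] <;> norm_num
  have hα0 : α ≠ 0 := by rcases hα with rfl | rfl <;> norm_num
  have htrP : P.trace = 0 := by rcases hP with rfl|rfl|rfl; exacts [trX, trY, trZ]
  have htrQ : Q.trace = 0 := by
    have h1 : (C * P * Cᴴ).trace = 0 := by
      rw [Matrix.trace_mul_comm, ← Matrix.mul_assoc, huL, one_mul, htrP]
    rw [heq, Matrix.trace_smul, smul_eq_mul] at h1
    exact (mul_eq_zero.mp h1).resolve_left hα0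
  have hQ' : Q = PX ∨ Q = PY ∨ Q = PZ := by
    rcases hQ with rfl | h
    · exfalso; rw [Matrix.trace_one] at htrQ; norm_num at htrQ
    · exact h
  have h1 : α • (Cᴴ * Q * C) = P := by
    have h2 : Cᴴ * (C * P * Cᴴ) * C = (Cᴴ * C) * P * (Cᴴ * C) := by noncomm_ring
    rw [heq, huL, one_mul, mul_one] at h2
    rw [← h2, Matrix.mul_smul, Matrix.smul_mul]
  have hαα : α * α = 1 := by rcases hα with rfl|rfl <;> norm_num
  refine ⟨Q, hQ', α, hα, ?_⟩
  calc Cᴴ * Q * C = (α*α) • (Cᴴ * Q * C) := by rw [hαα, one_smul]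
    _ = α • (α • (Cᴴ * Q * C)) := by rw [← smul_smul]
    _ = α • P := by rw [h1]

/-- two conjugated Paulis with distinct targets are distinct -/
lemma conj_ne (C : M2) {Q Q' P P' : M2} {ε ε' : ℂ}
    (h : Cᴴ * Q * C = ε • P) (h' : Cᴴ * Q' * C = ε' • P')
    (hε : ε = 1 ∨ ε = -1) (hε' : ε' = 1 ∨ ε' = -1)
    (hne : ∀ c : ℂ, P ≠ c • P') : Q ≠ Q' := by
  intro hqq
  rw [hqq, h'] at h
  have hεε : ε * ε = 1 := by rcases hε with rfl|rfl <;> norm_num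
  apply hne (ε * ε')
  calc P = (ε * ε) • P := by rw [hεε, one_smul]
    _ = ε • (ε • P) := by rw [← smul_smul]
    _ = ε • (ε' • P') := by rw [← h]
    _ = (ε * ε') • P' := by rw [smul_smul]

lemma X_ne_smul_Y : ∀ c : ℂ, PX ≠ c • PY := by
  intro c h
  have h1 := congr_fun (congr_fun h 0) 1
  have h2 := congr_fun (congr_fun h 1) 0
  simp [PX, PY, Matrix.smul_apply, Complex.ext_iff] at h1 h2
  linarith [h1.1, h2.1]

lemma X_ne_smul_Z : ∀ c : ℂ, PX ≠ c • PZ := by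
  intro c h
  have h1 := congr_fun (congr_fun h 0) 1
  simp [PX, PZ, Matrix.smul_apply] at h1

lemma Y_ne_smul_Z : ∀ c : ℂ, PY ≠ c • PZ := by
  intro c h
  have h1 := congr_fun (congr_fun h 1) 0
  simp [PY, PZ, Matrix.smul_apply, Complex.ext_iff] at h1

lemma perm3 {α : Type*} {x y z a b c : α}
    (hx : a = x ∨ a = y ∨ a = z) (hy : b = x ∨ b = y ∨ b = z) (hz : c = x ∨ c = y ∨ c = z)
    (hab : a ≠ b) (hac : a ≠ c) (hbc : b ≠ c) :
    ∀ w, (w = x ∨ w = y ∨ w = z) → (w = a ∨ w = b ∨ w = c) := by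
  rcases hx with rfl|rfl|rfl <;> rcases hy with rfl|rfl|rfl <;> rcases hz with rfl|rfl|rfl <;>
    tauto


/-! ### The 15-element index set -/

def T15 : Set (M2 × M2) := {((1:M2),PX),((1:M2),PY),((1:M2),PZ),(PX,1),(PX,PX),(PX,PY),(PX,PZ),
  (PY,1),(PY,PX),(PY,PY),(PY,PZ),(PZ,1),(PZ,PX),(PZ,PY),(PZ,PZ)}

lemma mem_T15 (A B : M2) :
    (A ∈ PauliSet ∧ B ∈ PauliSet ∧ (A,B) ≠ ((1:M2),(1:M2))) ↔ (A,B) ∈ T15 := by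
  constructor
  · rintro ⟨hA, hB, hne⟩
    rcases hA with rfl|rfl|rfl|rfl <;> rcases hB with rfl|rfl|rfl|rfl
    · exact absurd rfl hne
    · exact Set.mem_insert _ _
    · exact Set.mem_insert_of_mem _ (Set.mem_insert _ _)
    · exact Set.mem_insert_of_mem _ (Set.mem_insert_of_mem _ (Set.mem_insert _ _))
    · exact Set.mem_insert_of_mem _ (Set.mem_insert_of_mem _ (Set.mem_insert_of_mem _ (Set.mem_insert _ _)))
    · exact Set.mem_insert_of_mem _ (Set.mem_insert_of_mem _ (Set.mem_insert_of_mem _ (Set.mem_insert_of_mem _ (Set.mem_insert _ _))))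
    · exact Set.mem_insert_of_mem _ (Set.mem_insert_of_mem _ (Set.mem_insert_of_mem _ (Set.mem_insert_of_mem _ (Set.mem_insert_of_mem _ (Set.mem_insert _ _)))))
    · exact Set.mem_insert_of_mem _ (Set.mem_insert_of_mem _ (Set.mem_insert_of_mem _ (Set.mem_insert_of_mem _ (Set.mem_insert_of_mem _ (Set.mem_insert_of_mem _ (Set.mem_insert _ _))))))
    · exact Set.mem_insert_of_mem _ (Set.mem_insert_of_mem _ (Set.mem_insert_of_mem _ (Set.mem_insert_of_mem _ (Set.mem_insert_of_mem _ (Set.mem_insert_of_mem _ (Set.mem_insert_of_mem _ (Set.mem_insert _ _)))))))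
    · exact Set.mem_insert_of_mem _ (Set.mem_insert_of_mem _ (Set.mem_insert_of_mem _ (Set.mem_insert_of_mem _ (Set.mem_insert_of_mem _ (Set.mem_insert_of_mem _ (Set.mem_insert_of_mem _ (Set.mem_insert_of_mem _ (Set.mem_insert _ _))))))))
    · exact Set.mem_insert_of_mem _ (Set.mem_insert_of_mem _ (Set.mem_insert_of_mem _ (Set.mem_insert_of_mem _ (Set.mem_insert_of_mem _ (Set.mem_insert_of_mem _ (Set.mem_insert_of_mem _ (Set.mem_insert_of_mem _ (Set.mem_insert_of_mem _ (Set.mem_insert _ _)))))))))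
    · exact Set.mem_insert_of_mem _ (Set.mem_insert_of_mem _ (Set.mem_insert_of_mem _ (Set.mem_insert_of_mem _ (Set.mem_insert_of_mem _ (Set.mem_insert_of_mem _ (Set.mem_insert_of_mem _ (Set.mem_insert_of_mem _ (Set.mem_insert_of_mem _ (Set.mem_insert_of_mem _ (Set.mem_insert _ _))))))))))
    · exact Set.mem_insert_of_mem _ (Set.mem_insert_of_mem _ (Set.mem_insert_of_mem _ (Set.mem_insert_of_mem _ (Set.mem_insert_of_mem _ (Set.mem_insert_of_mem _ (Set.mem_insert_of_mem _ (Set.mem_insert_of_mem _ (Set.mem_insert_of_mem _ (Set.mem_insert_of_mem _ (Set.mem_insert_of_mem _ (Set.mem_insert _ _)))))))))))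
    · exact Set.mem_insert_of_mem _ (Set.mem_insert_of_mem _ (Set.mem_insert_of_mem _ (Set.mem_insert_of_mem _ (Set.mem_insert_of_mem _ (Set.mem_insert_of_mem _ (Set.mem_insert_of_mem _ (Set.mem_insert_of_mem _ (Set.mem_insert_of_mem _ (Set.mem_insert_of_mem _ (Set.mem_insert_of_mem _ (Set.mem_insert_of_mem _ (Set.mem_insert _ _))))))))))))
    · exact Set.mem_insert_of_mem _ (Set.mem_insert_of_mem _ (Set.mem_insert_of_mem _ (Set.mem_insert_of_mem _ (Set.mem_insert_of_mem _ (Set.mem_insert_of_mem _ (Set.mem_insert_of_mem _ (Set.mem_insert_of_mem _ (Set.mem_insert_of_mem _ (Set.mem_insert_of_mem _ (Set.mem_insert_of_mem _ (Set.mem_insert_of_mem _ (Set.mem_insert_of_mem _ (Set.mem_insert _ _)))))))))))))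
    · exact Set.mem_insert_of_mem _ (Set.mem_insert_of_mem _ (Set.mem_insert_of_mem _ (Set.mem_insert_of_mem _ (Set.mem_insert_of_mem _ (Set.mem_insert_of_mem _ (Set.mem_insert_of_mem _ (Set.mem_insert_of_mem _ (Set.mem_insert_of_mem _ (Set.mem_insert_of_mem _ (Set.mem_insert_of_mem _ (Set.mem_insert_of_mem _ (Set.mem_insert_of_mem _ (Set.mem_insert_of_mem _ (Set.mem_singleton _))))))))))))))
  · intro h
    simp only [T15, Set.mem_insert_iff, Set.mem_singleton_iff] at h
    rcases h with h|h|h|h|h|h|h|h|h|h|h|h|h|h|h <;> obtain ⟨rfl, rfl⟩ := Prod.mk.inj h <;>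
      refine ⟨by simp [PauliSet], by simp [PauliSet], by
        simp [Prod.ext_iff, Ne.symm d1X, Ne.symm d1Y, Ne.symm d1Z]⟩

lemma T15_fin : T15.Finite := by
  rw [T15]
  repeat first | exact Set.finite_singleton _ | apply Set.Finite.insert

set_option maxHeartbeats 1000000 in
lemma T15_card : T15.ncard = 15 := by
  rw [T15]
  repeat
    rw [Set.ncard_insert_of_notMem
      (by simp [Prod.ext_iff, d1X, d1Y, d1Z, dXY, dXZ, dYZ, Ne.symm d1X, Ne.symm d1Y,
        Ne.symm d1Z, Ne.symm dXY, Ne.symm dXZ, Ne.symm dYZ])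
      (by repeat first | exact Set.finite_singleton _ | apply Set.Finite.insert)]
  rw [Set.ncard_singleton]

end Stmt11Aux

set_option maxHeartbeats 1000000 in
/-- For a Clifford unitary `C` and `v := (1 ⊗ C)·Φ`, among the 15
non-identity Pauli pairs exactly 3 have expectation in `{±1}` in `v`, and the remaining
12 have expectation `0` in `v`. -/
theorem stmt11 (C : M2) (hC : IsClifford C) :
    {q : M2 × M2 | q.1 ∈ PauliSet ∧ q.2 ∈ PauliSet ∧ q ≠ (1, 1) ∧
        pairExp (((1 : M2) ⊗ₖ C).mulVec BellPhi) q.1 q.2 ∈ ({1, -1} : Set ℂ)}.ncard = 3 ∧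
    {q : M2 × M2 | q.1 ∈ PauliSet ∧ q.2 ∈ PauliSet ∧ q ≠ (1, 1) ∧
        pairExp (((1 : M2) ⊗ₖ C).mulVec BellPhi) q.1 q.2 = 0}.ncard = 12 := by
  classical
  obtain ⟨QX, hQXm, εX, hεX, hqx⟩ := Stmt11Aux.exists_conj C hC PX (Or.inl rfl)
  obtain ⟨QY, hQYm, εY, hεY, hqy⟩ := Stmt11Aux.exists_conj C hC PY (Or.inr (Or.inl rfl))
  obtain ⟨QZ, hQZm, εZ, hεZ, hqz⟩ := Stmt11Aux.exists_conj C hC PZ (Or.inr (Or.inr rfl))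
  have huL : Cᴴ * C = 1 := by
    have := hC.1
    rw [Matrix.mem_unitaryGroup_iff'] at this
    simpa [Matrix.star_eq_conjTranspose] using this
  have hXY : QX ≠ QY := Stmt11Aux.conj_ne C hqx hqy hεX hεY Stmt11Aux.X_ne_smul_Y
  have hXZ : QX ≠ QZ := Stmt11Aux.conj_ne C hqx hqz hεX hεZ Stmt11Aux.X_ne_smul_Z
  have hYZ : QY ≠ QZ := Stmt11Aux.conj_ne C hqy hqz hεY hεZ Stmt11Aux.Y_ne_smul_Z
  have hQXP : QX ∈ PauliSet := by rcases hQXm with rfl|rfl|rfl <;> simp [PauliSet]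
  have hQYP : QY ∈ PauliSet := by rcases hQYm with rfl|rfl|rfl <;> simp [PauliSet]
  have hQZP : QZ ∈ PauliSet := by rcases hQZm with rfl|rfl|rfl <;> simp [PauliSet]
  have hsurj : ∀ B, (B = PX ∨ B = PY ∨ B = PZ) → (B = QX ∨ B = QY ∨ B = QZ) :=
    Stmt11Aux.perm3 hQXm hQYm hQZm hXY hXZ hYZ
  set v := ((1 : M2) ⊗ₖ C).mulVec BellPhi with hv
  have hform : ∀ (A Q : M2) (ε : ℂ) (P : M2), Cᴴ * Q * C = ε • P →
      pairExp v A Q = ε * (∑ i, ∑ k, A i k * P i k) / 2 := by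
    intro A Q ε P h
    rw [hv, Stmt11Aux.pairExp_eq, h]
    simp only [Matrix.smul_apply, smul_eq_mul, Fin.sum_univ_two]
    ring
  have hform1 : ∀ A : M2, pairExp v A 1 = (∑ i, ∑ k, A i k * (1:M2) i k) / 2 := by
    intro A
    have h : Cᴴ * (1:M2) * C = (1:ℂ) • (1:M2) := by rw [mul_one, huL, one_smul]
    rw [hform A 1 1 1 h]; ring
  have vX : pairExp v PX QX = εX := by
    rw [hform PX QX εX PX hqx, Stmt11Aux.S_diag_X]; ring
  have vY : pairExp v PY QY = -εY := by
    rw [hform PY QY εY PY hqy, Stmt11Aux.S_diag_Y]; ring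
  have vZ : pairExp v PZ QZ = εZ := by
    rw [hform PZ QZ εZ PZ hqz, Stmt11Aux.S_diag_Z]; ring
  have vXm : pairExp v PX QX ∈ ({1, -1} : Set ℂ) := by
    rw [vX]; rcases hεX with rfl|rfl <;> simp
  have vYm : pairExp v PY QY ∈ ({1, -1} : Set ℂ) := by
    rw [vY]; rcases hεY with rfl|rfl <;> simp
  have vZm : pairExp v PZ QZ ∈ ({1, -1} : Set ℂ) := by
    rw [vZ]; rcases hεZ with rfl|rfl <;> simp
  set G3 : Set (M2 × M2) := {(PX,QX),(PY,QY),(PZ,QZ)} with hG3def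
  have hzero : ∀ A B : M2, (A = 1 ∨ A = PX ∨ A = PY ∨ A = PZ) →
      (B = 1 ∨ B = QX ∨ B = QY ∨ B = QZ) →
      (A, B) ≠ ((1:M2), (1:M2)) → (A, B) ∉ G3 →
      pairExp v A B = 0 := by
    intro A B hA hB hne hnG
    simp only [hG3def, Set.mem_insert_iff, Set.mem_singleton_iff, Prod.mk.injEq, not_or,
      not_and] at hnG
    obtain ⟨hn1, hn2, hn3⟩ := hnG
    rcases hB with rfl | rfl | rfl | rfl
    · rcases hA with rfl | hA'
      · exact absurd rfl hne
      · rw [hform1, Stmt11Aux.S_one A hA']; ring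
    · have hAX : A ≠ PX := fun h => (hn1 h) rfl
      rw [hform A _ _ _ hqx, Stmt11Aux.S_cross A hA PX (Or.inl rfl) hAX]; ring
    · have hAY : A ≠ PY := fun h => (hn2 h) rfl
      rw [hform A _ _ _ hqy, Stmt11Aux.S_cross A hA PY (Or.inr (Or.inl rfl)) hAY]; ring
    · have hAZ : A ≠ PZ := fun h => (hn3 h) rfl
      rw [hform A _ _ _ hqz, Stmt11Aux.S_cross A hA PZ (Or.inr (Or.inr rfl)) hAZ]; ring
  have hT := Stmt11Aux.mem_T15
  have hTfin := Stmt11Aux.T15_fin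
  have hTcard := Stmt11Aux.T15_card
  have hG3card : G3.ncard = 3 := by
    rw [hG3def]
    rw [Set.ncard_insert_of_notMem
      (by simp [Prod.ext_iff, Stmt11Aux.dXY, Stmt11Aux.dXZ])
      (by repeat first | exact Set.finite_singleton _ | apply Set.Finite.insert)]
    rw [Set.ncard_pair (by simp [Prod.ext_iff, Stmt11Aux.dYZ])]
  have hsub : G3 ⊆ Stmt11Aux.T15 := by
    intro q hq
    simp only [hG3def, Set.mem_insert_iff, Set.mem_singleton_iff] at hq
    rcases hq with rfl|rfl|rfl
    · rcases hQXm with rfl|rfl|rfl <;> simp [Stmt11Aux.T15, Prod.ext_iff]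
    · rcases hQYm with rfl|rfl|rfl <;> simp [Stmt11Aux.T15, Prod.ext_iff]
    · rcases hQZm with rfl|rfl|rfl <;> simp [Stmt11Aux.T15, Prod.ext_iff]
  have hBlist : ∀ B : M2, B ∈ PauliSet → (B = 1 ∨ B = QX ∨ B = QY ∨ B = QZ) := by
    rintro B (rfl|hB')
    · exact Or.inl rfl
    · exact Or.inr (hsurj B hB')
  have hGset : {q : M2 × M2 | q.1 ∈ PauliSet ∧ q.2 ∈ PauliSet ∧ q ≠ (1, 1) ∧
      pairExp v q.1 q.2 ∈ ({1, -1} : Set ℂ)} = G3 := by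
    ext ⟨A, B⟩
    simp only [Set.mem_setOf_eq]
    constructor
    · rintro ⟨hA, hB, hne, hval⟩
      by_contra hnG
      have h0 := hzero A B (by simpa [PauliSet] using hA) (hBlist B hB) hne hnG
      rw [h0] at hval
      simp only [Set.mem_insert_iff, Set.mem_singleton_iff] at hval
      rcases hval with h|h <;> norm_num at h
    · intro hq
      simp only [hG3def, Set.mem_insert_iff, Set.mem_singleton_iff] at hq
      rcases hq with h|h|h <;> obtain ⟨rfl, rfl⟩ := Prod.mk.inj h
      · exact ⟨by simp [PauliSet], hQXP, by simp [Prod.ext_iff, Ne.symm Stmt11Aux.d1X], vXm⟩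
      · exact ⟨by simp [PauliSet], hQYP, by simp [Prod.ext_iff, Ne.symm Stmt11Aux.d1Y], vYm⟩
      · exact ⟨by simp [PauliSet], hQZP, by simp [Prod.ext_iff, Ne.symm Stmt11Aux.d1Z], vZm⟩
  have hZset : {q : M2 × M2 | q.1 ∈ PauliSet ∧ q.2 ∈ PauliSet ∧ q ≠ (1, 1) ∧
      pairExp v q.1 q.2 = 0} = Stmt11Aux.T15 \ G3 := by
    ext ⟨A, B⟩
    simp only [Set.mem_setOf_eq, Set.mem_diff]
    constructor
    · rintro ⟨hA, hB, hne, hval⟩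
      refine ⟨(hT A B).mp ⟨hA, hB, hne⟩, fun hmem => ?_⟩
      simp only [hG3def, Set.mem_insert_iff, Set.mem_singleton_iff] at hmem
      rcases hmem with h|h|h <;> obtain ⟨rfl, rfl⟩ := Prod.mk.inj h
      · have := vX.symm.trans hval; rcases hεX with rfl|rfl <;> norm_num at this
      · have := vY.symm.trans hval; rcases hεY with rfl|rfl <;> norm_num at this
      · have := vZ.symm.trans hval; rcases hεZ with rfl|rfl <;> norm_num at this
    · rintro ⟨hTm, hnG⟩
      obtain ⟨hA, hB, hne⟩ := (hT A B).mpr hTm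
      exact ⟨hA, hB, hne, hzero A B (by simpa [PauliSet] using hA) (hBlist B hB) hne hnG⟩
  constructor
  · rw [hGset, hG3card]
  · have hG3fin : G3.Finite := by
      rw [hG3def]
      repeat first | exact Set.finite_singleton _ | apply Set.Finite.insert
    rw [hZset, Set.ncard_diff hsub hG3fin, hTcard, hG3card]

end
end
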